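/- Let F be a symmetric fourth-order tensor on ℝⁿ with multilinear form F⁴ and convex score function S⁴(x) = F⁴(x,x,x,x). Then for all x,y,z,t ∈ ℝⁿ: 4 F⁴(x,y,z,t) ≤ F⁴(x,x,z,z) + F⁴(x,x,t,t) + F⁴(y,y,z,z) + F⁴(y,y,t,t). -/
import Mathlib


/-- A fourth-order tensor is symmetric if its entries are invariant under any
permutation of the indices. -/
def Sym4 {n : ℕ} (F : Fin n → Fin n → Fin n → Fin n → ℝ) : Prop :=
  ∀ (σ : Equiv.Perm (Fin 4)) (v : Fin 4 → Fin n),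
    F (v (σ 0)) (v (σ 1)) (v (σ 2)) (v (σ 3)) = F (v 0) (v 1) (v 2) (v 3)

/-- The multilinear form associated to a fourth-order tensor. -/
def mform4 {n : ℕ} (F : Fin n → Fin n → Fin n → Fin n → ℝ)
    (x y z t : Fin n → ℝ) : ℝ :=
  ∑ i, ∑ j, ∑ k, ∑ l, F i j k l * x i * y j * z k * t l

section Aux

variable {n : ℕ} {F : Fin n → Fin n → Fin n → Fin n → ℝ}

lemma madd1 (F : Fin n → Fin n → Fin n → Fin n → ℝ) (x x' y z t : Fin n → ℝ) :
    mform4 F (x + x') y z t = mform4 F x y z t + mform4 F x' y z t := by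
  simp only [mform4, Pi.add_apply, mul_add, add_mul, Finset.sum_add_distrib]

lemma madd2 (F : Fin n → Fin n → Fin n → Fin n → ℝ) (x y y' z t : Fin n → ℝ) :
    mform4 F x (y + y') z t = mform4 F x y z t + mform4 F x y' z t := by
  simp only [mform4, Pi.add_apply, mul_add, add_mul, Finset.sum_add_distrib]

lemma madd3 (F : Fin n → Fin n → Fin n → Fin n → ℝ) (x y z z' t : Fin n → ℝ) :
    mform4 F x y (z + z') t = mform4 F x y z t + mform4 F x y z' t := by
  simp only [mform4, Pi.add_apply, mul_add, add_mul, Finset.sum_add_distrib]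

lemma madd4 (F : Fin n → Fin n → Fin n → Fin n → ℝ) (x y z t t' : Fin n → ℝ) :
    mform4 F x y z (t + t') = mform4 F x y z t + mform4 F x y z t' := by
  simp only [mform4, Pi.add_apply, mul_add, add_mul, Finset.sum_add_distrib]

lemma msmul1 (F : Fin n → Fin n → Fin n → Fin n → ℝ) (s : ℝ) (x y z t : Fin n → ℝ) :
    mform4 F (s • x) y z t = s * mform4 F x y z t := by
  unfold mform4
  rw [Finset.mul_sum]
  refine Finset.sum_congr rfl fun i _ => ?_
  rw [Finset.mul_sum]
  refine Finset.sum_congr rfl fun j _ => ?_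
  rw [Finset.mul_sum]
  refine Finset.sum_congr rfl fun k _ => ?_
  rw [Finset.mul_sum]
  refine Finset.sum_congr rfl fun l _ => ?_
  simp only [Pi.smul_apply, smul_eq_mul]; ring

lemma msmul2 (F : Fin n → Fin n → Fin n → Fin n → ℝ) (s : ℝ) (x y z t : Fin n → ℝ) :
    mform4 F x (s • y) z t = s * mform4 F x y z t := by
  unfold mform4
  rw [Finset.mul_sum]
  refine Finset.sum_congr rfl fun i _ => ?_
  rw [Finset.mul_sum]
  refine Finset.sum_congr rfl fun j _ => ?_
  rw [Finset.mul_sum]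
  refine Finset.sum_congr rfl fun k _ => ?_
  rw [Finset.mul_sum]
  refine Finset.sum_congr rfl fun l _ => ?_
  simp only [Pi.smul_apply, smul_eq_mul]; ring

lemma msmul3 (F : Fin n → Fin n → Fin n → Fin n → ℝ) (s : ℝ) (x y z t : Fin n → ℝ) :
    mform4 F x y (s • z) t = s * mform4 F x y z t := by
  unfold mform4
  rw [Finset.mul_sum]
  refine Finset.sum_congr rfl fun i _ => ?_
  rw [Finset.mul_sum]
  refine Finset.sum_congr rfl fun j _ => ?_
  rw [Finset.mul_sum]
  refine Finset.sum_congr rfl fun k _ => ?_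
  rw [Finset.mul_sum]
  refine Finset.sum_congr rfl fun l _ => ?_
  simp only [Pi.smul_apply, smul_eq_mul]; ring

lemma msmul4 (F : Fin n → Fin n → Fin n → Fin n → ℝ) (s : ℝ) (x y z t : Fin n → ℝ) :
    mform4 F x y z (s • t) = s * mform4 F x y z t := by
  unfold mform4
  rw [Finset.mul_sum]
  refine Finset.sum_congr rfl fun i _ => ?_
  rw [Finset.mul_sum]
  refine Finset.sum_congr rfl fun j _ => ?_
  rw [Finset.mul_sum]
  refine Finset.sum_congr rfl fun k _ => ?_
  rw [Finset.mul_sum]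
  refine Finset.sum_congr rfl fun l _ => ?_
  simp only [Pi.smul_apply, smul_eq_mul]; ring

lemma Fswap12 (hF : Sym4 F) (i j k l : Fin n) : F i j k l = F j i k l := by
  have := hF (Equiv.swap 0 1) ![j, i, k, l]
  simpa [Equiv.swap_apply_left, Equiv.swap_apply_right,
    Equiv.swap_apply_of_ne_of_ne, show ((2:Fin 4)) ≠ 0 by decide,
    show ((2:Fin 4)) ≠ 1 by decide, show ((3:Fin 4)) ≠ 0 by decide,
    show ((3:Fin 4)) ≠ 1 by decide] using this

lemma Fswap23 (hF : Sym4 F) (i j k l : Fin n) : F i j k l = F i k j l := by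
  have := hF (Equiv.swap 1 2) ![i, k, j, l]
  simpa [Equiv.swap_apply_left, Equiv.swap_apply_right,
    Equiv.swap_apply_of_ne_of_ne, show ((0:Fin 4)) ≠ 1 by decide,
    show ((0:Fin 4)) ≠ 2 by decide, show ((3:Fin 4)) ≠ 1 by decide,
    show ((3:Fin 4)) ≠ 2 by decide] using this

lemma Fswap34 (hF : Sym4 F) (i j k l : Fin n) : F i j k l = F i j l k := by
  have := hF (Equiv.swap 2 3) ![i, j, l, k]
  simpa [Equiv.swap_apply_left, Equiv.swap_apply_right,
    Equiv.swap_apply_of_ne_of_ne, show ((0:Fin 4)) ≠ 2 by decide,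
    show ((0:Fin 4)) ≠ 3 by decide, show ((1:Fin 4)) ≠ 2 by decide,
    show ((1:Fin 4)) ≠ 3 by decide] using this

lemma mswap12 (hF : Sym4 F) (x y z t : Fin n → ℝ) :
    mform4 F x y z t = mform4 F y x z t := by
  unfold mform4
  rw [Finset.sum_comm]
  refine Finset.sum_congr rfl fun j _ => Finset.sum_congr rfl fun i _ =>
    Finset.sum_congr rfl fun k _ => Finset.sum_congr rfl fun l _ => ?_
  rw [Fswap12 hF i j k l]; ring

lemma mswap23 (hF : Sym4 F) (x y z t : Fin n → ℝ) :
    mform4 F x y z t = mform4 F x z y t := by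
  unfold mform4
  refine Finset.sum_congr rfl fun i _ => ?_
  rw [Finset.sum_comm]
  refine Finset.sum_congr rfl fun k _ => Finset.sum_congr rfl fun j _ =>
    Finset.sum_congr rfl fun l _ => ?_
  rw [Fswap23 hF i j k l]; ring

lemma mswap34 (hF : Sym4 F) (x y z t : Fin n → ℝ) :
    mform4 F x y z t = mform4 F x y t z := by
  unfold mform4
  refine Finset.sum_congr rfl fun i _ => Finset.sum_congr rfl fun j _ => ?_
  rw [Finset.sum_comm]
  refine Finset.sum_congr rfl fun l _ => Finset.sum_congr rfl fun k _ => ?_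
  rw [Fswap34 hF i j k l]; ring

lemma realkey (c d : ℝ) (hs : ∀ s : ℝ, 0 ≤ 12 * s ^ 2 * c + 2 * (s ^ 2) ^ 2 * d) :
    0 ≤ c := by
  by_contra hc
  push_neg at hc
  rcases le_or_gt d 0 with hd | hd
  · have := hs 1; nlinarith
  · have hnn : 0 ≤ -3 * c / d := div_nonneg (by linarith) (le_of_lt hd)
    have hsq : Real.sqrt (-3 * c / d) ^ 2 = -3 * c / d := Real.sq_sqrt hnn
    have h := hs (Real.sqrt (-3 * c / d))
    rw [hsq] at h
    have heq : 12 * (-3 * c / d) * c + 2 * (-3 * c / d) ^ 2 * d = -18 * c ^ 2 / d := by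
      field_simp; ring
    rw [heq, le_div_iff₀ hd] at h
    nlinarith

lemma mkey (hF : Sym4 F)
    (hconv : ConvexOn ℝ Set.univ (fun x : Fin n → ℝ => mform4 F x x x x))
    (u v : Fin n → ℝ) : 0 ≤ mform4 F u u v v := by
  have h1 : mform4 F u v u v = mform4 F u u v v := mswap23 hF u v u v
  have h2 : mform4 F u v v u = mform4 F u u v v := (mswap34 hF u v v u).trans h1
  have h3 : mform4 F v u u v = mform4 F u u v v := (mswap12 hF v u u v).trans h1
  have h4 : mform4 F v u v u = mform4 F u u v v := (mswap12 hF v u v u).trans h2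
  have h5 : mform4 F v v u u = mform4 F u u v v := (mswap23 hF v v u u).trans h4
  refine realkey _ (mform4 F v v v v) fun s => ?_
  have hexp : mform4 F (u + s • v) (u + s • v) (u + s • v) (u + s • v)
      + mform4 F (u + (-s) • v) (u + (-s) • v) (u + (-s) • v) (u + (-s) • v)
      = 2 * mform4 F u u u u + 12 * s ^ 2 * mform4 F u u v v
        + 2 * (s ^ 2) ^ 2 * mform4 F v v v v := by
    simp only [madd1, madd2, madd3, madd4, msmul1, msmul2, msmul3, msmul4]
    linear_combination 2 * s ^ 2 * h1 + 2 * s ^ 2 * h2 + 2 * s ^ 2 * h3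
      + 2 * s ^ 2 * h4 + 2 * s ^ 2 * h5
  have hmid : (1/2 : ℝ) • (u + s • v) + (1/2 : ℝ) • (u + (-s) • v) = u := by
    funext i
    simp only [Pi.smul_apply, Pi.add_apply, smul_eq_mul]
    ring
  have hc := hconv.2 (Set.mem_univ (u + s • v)) (Set.mem_univ (u + (-s) • v))
    (by norm_num : (0:ℝ) ≤ 1/2) (by norm_num : (0:ℝ) ≤ 1/2) (by norm_num)
  rw [hmid] at hc
  simp only [smul_eq_mul] at hc
  linarith [hexp, hc]

end Aux

/-- If the score function of a symmetric fourth-order tensor is convex, then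
`4 F⁴(x,y,z,t) ≤ F⁴(x,x,z,z) + F⁴(x,x,t,t) + F⁴(y,y,z,z) + F⁴(y,y,t,t)`. -/
theorem stmt_7 {n : ℕ} (F : Fin n → Fin n → Fin n → Fin n → ℝ) (hF : Sym4 F)
    (hconv : ConvexOn ℝ Set.univ (fun x : Fin n → ℝ => mform4 F x x x x)) :
    ∀ x y z t : Fin n → ℝ,
      4 * mform4 F x y z t ≤
        mform4 F x x z z + mform4 F x x t t + mform4 F y y z z + mform4 F y y t t := by
  intro x y z t
  have e1 := mkey hF hconv (x + y) (z + (-1 : ℝ) • t)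
  have e2 := mkey hF hconv (x + (-1 : ℝ) • y) (z + t)
  simp only [madd1, madd2, madd3, madd4, msmul1, msmul2, msmul3, msmul4] at e1 e2
  have s1 : mform4 F y x z z = mform4 F x y z z := (mswap12 hF x y z z).symm
  have s2 : mform4 F y x z t = mform4 F x y z t := (mswap12 hF x y z t).symm
  have s3 : mform4 F y x t z = mform4 F x y t z := (mswap12 hF x y t z).symm
  have s4 : mform4 F y x t t = mform4 F x y t t := (mswap12 hF x y t t).symm
  have s5 : mform4 F x x t z = mform4 F x x z t := (mswap34 hF x x z t).symm
  have s6 : mform4 F x y t z = mform4 F x y z t := (mswap34 hF x y z t).symm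
  have s7 : mform4 F y y t z = mform4 F y y z t := (mswap34 hF y y z t).symm
  linarith [e1, e2, s1, s2, s3, s4, s5, s6, s7]
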